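/- For any POVM element E on the joint space (0 ≤ E ≤ I), with ψ and φ as above, |Tr(E(ψ − φ))| ≤ (1/4)(|Tr(E((|Φ⁺⟩⟨Φ⁺|)⊗(ρ₀−ρ₁)))| + |Tr(E((|Φ⁻⟩⟨Φ⁻|)⊗(ρ₀−ρ₁)))|) ≤ (1/2)·TD(ρ₀, ρ₁). Hence any distinguisher's advantage on (ψ, φ) is at most half its maximal advantage on (ρ₀, ρ₁). -/

import Mathlib

open Matrix
open scoped Kronecker ComplexOrder MatrixOrder

open Classical in
noncomputable def matSqrt {d : Type*} [Fintype d] [DecidableEq d]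
    (A : Matrix d d ℂ) : Matrix d d ℂ :=
  if h : A.PosSemidef then
    (h.1.eigenvectorUnitary : Matrix d d ℂ) * diagonal ((↑) ∘ (√·) ∘ h.1.eigenvalues) *
      (star h.1.eigenvectorUnitary : Matrix d d ℂ) else 0

noncomputable def traceNorm {d : Type*} [Fintype d] [DecidableEq d]
    (A : Matrix d d ℂ) : ℝ :=
  (matSqrt (Aᴴ * A)).trace.re

noncomputable def traceDist {d : Type*} [Fintype d] [DecidableEq d]
    (ρ σ : Matrix d d ℂ) : ℝ :=
  traceNorm (ρ - σ) / 2

noncomputable def fidelity {d : Type*} [Fintype d] [DecidableEq d]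
    (ρ σ : Matrix d d ℂ) : ℝ :=
  ((matSqrt (matSqrt ρ * σ * matSqrt ρ)).trace.re) ^ 2

def IsDensity {d : Type*} [Fintype d] [DecidableEq d]
    (ρ : Matrix d d ℂ) : Prop :=
  ρ.PosSemidef ∧ ρ.trace = 1

def IsPOVMElem {d : Type*} [Fintype d] [DecidableEq d]
    (E : Matrix d d ℂ) : Prop :=
  E.PosSemidef ∧ (1 - E).PosSemidef

noncomputable def tensorPow {d : Type*} [Fintype d] [DecidableEq d]
    (ρ : Matrix d d ℂ) (q : ℕ) : Matrix (Fin q → d) (Fin q → d) ℂ :=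
  fun x y => ∏ i, ρ (x i) (y i)

noncomputable def ketPhiPlus : Fin 2 × Fin 2 → ℂ :=
  fun p => if p.1 = p.2 then (((Real.sqrt 2 : ℝ) : ℂ))⁻¹ else 0

noncomputable def ketPhiMinus : Fin 2 × Fin 2 → ℂ :=
  fun p => if p = (0, 0) then (((Real.sqrt 2 : ℝ) : ℂ))⁻¹
    else if p = (1, 1) then -(((Real.sqrt 2 : ℝ) : ℂ))⁻¹ else 0

noncomputable def outerProj {α : Type*} (v : α → ℂ) : Matrix α α ℂ :=
  Matrix.vecMulVec v (star v)

noncomputable def bellPlus : Matrix (Fin 2 × Fin 2) (Fin 2 × Fin 2) ℂ :=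
  outerProj ketPhiPlus

noncomputable def bellMinus : Matrix (Fin 2 × Fin 2) (Fin 2 × Fin 2) ℂ :=
  outerProj ketPhiMinus

/-! ### Auxiliary lemmas -/

lemma trace_psd_nonneg' {d : Type*} [Fintype d] [DecidableEq d] {A : Matrix d d ℂ}
    (hA : A.PosSemidef) : 0 ≤ A.trace := by
  exact hA.trace_nonneg

lemma trace_mul_psd_nonneg' {d : Type*} [Fintype d] [DecidableEq d] {A B : Matrix d d ℂ}
    (hA : A.PosSemidef) (hB : B.PosSemidef) : 0 ≤ (A * B).trace := by
  have h1 : (A * B).trace = (CFC.sqrt B * A * CFC.sqrt B).trace := by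
    conv_lhs => rw [← CFC.sqrt_mul_sqrt_self B hB.nonneg]
    rw [← Matrix.mul_assoc, Matrix.trace_mul_cycle]
  rw [h1]
  have h2 : (CFC.sqrt B * A * CFC.sqrt B).PosSemidef := by
    have := hA.mul_mul_conjTranspose_same (CFC.sqrt B)
    rwa [(CFC.sqrt_nonneg B).posSemidef.1.eq] at this
  exact trace_psd_nonneg' h2

lemma trace_conj_unitary' {d : Type*} [Fintype d] [DecidableEq d]
    (U : Matrix.unitaryGroup d ℂ) (D : Matrix d d ℂ) :
    ((U : Matrix d d ℂ) * D * (star U : Matrix d d ℂ)).trace = D.trace := by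
  rw [Matrix.trace_mul_cycle]
  have h : (star U : Matrix d d ℂ) * (U : Matrix d d ℂ) = 1 := U.2.1
  rw [h, Matrix.one_mul]

/-- The measurement advantage is bounded by the trace distance. -/
lemma meas_le_traceDist' {d : Type*} [Fintype d] [DecidableEq d]
    {F ρ₀ ρ₁ : Matrix d d ℂ} (hF : IsPOVMElem F)
    (h₀ : IsDensity ρ₀) (h₁ : IsDensity ρ₁) :
    ‖(F * (ρ₀ - ρ₁)).trace‖ ≤ traceDist ρ₀ ρ₁ := by
  set Δ : Matrix d d ℂ := ρ₀ - ρ₁ with hΔdef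
  have hΔ : Δ.IsHermitian := h₀.1.1.sub h₁.1.1
  set U := hΔ.eigenvectorUnitary with hU
  set lam := hΔ.eigenvalues with hlam
  set Dp : Matrix d d ℂ := Matrix.diagonal (fun i => ((max (lam i) 0 : ℝ) : ℂ)) with hDp
  set Dn : Matrix d d ℂ := Matrix.diagonal (fun i => ((max (-lam i) 0 : ℝ) : ℂ)) with hDn
  set Pm : Matrix d d ℂ := (U : Matrix d d ℂ) * Dp * (star U : Matrix d d ℂ) with hPm
  set Nm : Matrix d d ℂ := (U : Matrix d d ℂ) * Dn * (star U : Matrix d d ℂ) with hNm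
  have hspec : Δ = (U : Matrix d d ℂ) * Matrix.diagonal (RCLike.ofReal ∘ lam)
      * (star U : Matrix d d ℂ) := hΔ.spectral_theorem
  have hsub : Δ = Pm - Nm := by
    rw [hPm, hNm, ← Matrix.sub_mul, ← Matrix.mul_sub, Matrix.diagonal_sub]
    convert hspec using 4 with i
    · rfl
    · rfl
    funext i
    rw [← Complex.ofReal_sub]
    simp [Function.comp, max_zero_sub_max_neg_zero_eq_self]
  have hDpPsd : Dp.PosSemidef := Matrix.PosSemidef.diagonal fun i =>
    Complex.zero_le_real.mpr (le_max_right _ _)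
  have hDnPsd : Dn.PosSemidef := Matrix.PosSemidef.diagonal fun i =>
    Complex.zero_le_real.mpr (le_max_right _ _)
  have hPmPsd : Pm.PosSemidef := by
    have := hDpPsd.mul_mul_conjTranspose_same (U : Matrix d d ℂ)
    rwa [← Matrix.star_eq_conjTranspose] at this
  have hNmPsd : Nm.PosSemidef := by
    have := hDnPsd.mul_mul_conjTranspose_same (U : Matrix d d ℂ)
    rwa [← Matrix.star_eq_conjTranspose] at this
  -- trace norm of Δ
  have hherm : Δᴴ = Δ := hΔ.eq
  have hpsd : (Δᴴ * Δ).PosSemidef := Matrix.posSemidef_conjTranspose_mul_self Δ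
  set Da : Matrix d d ℂ := Matrix.diagonal (fun i => ((|lam i| : ℝ) : ℂ)) with hDa
  set S : Matrix d d ℂ := (U : Matrix d d ℂ) * Da * (star U : Matrix d d ℂ) with hS
  have hDaPsd : Da.PosSemidef := Matrix.PosSemidef.diagonal fun i =>
    Complex.zero_le_real.mpr (abs_nonneg _)
  have hSPsd : S.PosSemidef := by
    have := hDaPsd.mul_mul_conjTranspose_same (U : Matrix d d ℂ)
    rwa [← Matrix.star_eq_conjTranspose] at this
  have hUU : (star U : Matrix d d ℂ) * (U : Matrix d d ℂ) = 1 := U.2.1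
  have hUUmul : ∀ X : Matrix d d ℂ, (star U : Matrix d d ℂ) * ((U : Matrix d d ℂ) * X) = X :=
    fun X => by rw [← Matrix.mul_assoc, hUU, Matrix.one_mul]
  have hcancel : ∀ A B : Matrix d d ℂ,
      ((U : Matrix d d ℂ) * A * (star U : Matrix d d ℂ)) *
        ((U : Matrix d d ℂ) * B * (star U : Matrix d d ℂ))
      = (U : Matrix d d ℂ) * (A * B) * (star U : Matrix d d ℂ) := by
    intro A B
    simp only [Matrix.mul_assoc]
    rw [hUUmul]
  have hS2 : S ^ 2 = Δᴴ * Δ := by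
    rw [pow_two, hherm]
    conv_rhs => rw [hspec]
    rw [hS, hcancel, hcancel]
    congr 2
    rw [hDa, Matrix.diagonal_mul_diagonal, Matrix.diagonal_mul_diagonal]
    refine congrArg Matrix.diagonal (funext fun i => ?_)
    rw [← Complex.ofReal_mul, abs_mul_abs_self]
    simp [Function.comp, RCLike.ofReal]
  have hSsqrt : S = matSqrt (Δᴴ * Δ) := by
    have h1 : matSqrt (Δᴴ * Δ) = CFC.sqrt (Δᴴ * Δ) := by
      rw [matSqrt, dif_pos hpsd, CFC.sqrt_eq_real_sqrt _ hpsd.nonneg, cfcₙ_eq_cfc (hf0 := Real.sqrt_zero), hpsd.1.cfc_eq,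
        IsHermitian.cfc, Unitary.conjStarAlgAut_apply]
      rfl
    rw [h1, eq_comm]
    exact CFC.sqrt_unique (by rw [← pow_two]; exact hS2) hSPsd.nonneg
  have htn : traceNorm Δ = ∑ i, |lam i| := by
    rw [traceNorm, ← hSsqrt, hS, trace_conj_unitary', hDa,
      Matrix.trace_diagonal]
    simp
  -- traces of positive/negative parts
  have hPmtr : Pm.trace = ((∑ i, max (lam i) 0 : ℝ) : ℂ) := by
    rw [hPm, trace_conj_unitary', hDp, Matrix.trace_diagonal]
    push_cast; ring
  have hNmtr : Nm.trace = ((∑ i, max (-lam i) 0 : ℝ) : ℂ) := by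
    rw [hNm, trace_conj_unitary', hDn, Matrix.trace_diagonal]
    push_cast; ring
  have htr0 : Δ.trace = 0 := by
    rw [hΔdef, Matrix.trace_sub, h₀.2, h₁.2, sub_self]
  have hsum0 : (∑ i, max (lam i) 0) - (∑ i, max (-lam i) 0) = 0 := by
    have := htr0
    rw [hsub, Matrix.trace_sub, hPmtr, hNmtr, ← Complex.ofReal_sub] at this
    exact_mod_cast this
  have hsumT : (∑ i, max (lam i) 0) + (∑ i, max (-lam i) 0) = ∑ i, |lam i| := by
    rw [← Finset.sum_add_distrib]
    exact Finset.sum_congr rfl fun i _ => max_zero_add_max_neg_zero_eq_abs_self _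
  set T : ℝ := ∑ i, |lam i| with hT
  have hTp : (∑ i, max (lam i) 0) = T / 2 := by linarith
  have hTn : (∑ i, max (-lam i) 0) = T / 2 := by linarith
  -- bounds on measured traces
  set x : ℂ := (F * Pm).trace with hx
  set y : ℂ := (F * Nm).trace with hy
  have hx0 : 0 ≤ x := trace_mul_psd_nonneg' hF.1 hPmPsd
  have hy0 : 0 ≤ y := trace_mul_psd_nonneg' hF.1 hNmPsd
  have hxim : x.im = 0 := ((Complex.nonneg_iff.mp hx0).2).symm
  have hyim : y.im = 0 := ((Complex.nonneg_iff.mp hy0).2).symm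
  have hxre0 : 0 ≤ x.re := (Complex.nonneg_iff.mp hx0).1
  have hyre0 : 0 ≤ y.re := (Complex.nonneg_iff.mp hy0).1
  have hxre : x.re ≤ T / 2 := by
    have h := trace_mul_psd_nonneg' hF.2 hPmPsd
    rw [Matrix.sub_mul, Matrix.one_mul, Matrix.trace_sub] at h
    have := (Complex.nonneg_iff.mp h).1
    rw [Complex.sub_re, hPmtr, Complex.ofReal_re] at this
    linarith
  have hyre : y.re ≤ T / 2 := by
    have h := trace_mul_psd_nonneg' hF.2 hNmPsd
    rw [Matrix.sub_mul, Matrix.one_mul, Matrix.trace_sub] at h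
    have := (Complex.nonneg_iff.mp h).1
    rw [Complex.sub_re, hNmtr, Complex.ofReal_re] at this
    linarith
  have hzeq : (F * Δ).trace = x - y := by
    rw [hsub, Matrix.mul_sub, Matrix.trace_sub]
  have hzre : (F * Δ).trace = ((x.re - y.re : ℝ) : ℂ) := by
    rw [hzeq]
    apply Complex.ext <;> simp [hxim, hyim]
  have habs : ‖(F * Δ).trace‖ = |x.re - y.re| := by
    rw [hzre, Complex.norm_real, Real.norm_eq_abs]
  rw [habs]
  have htd : traceDist ρ₀ ρ₁ = T / 2 := by
    rw [traceDist, ← hΔdef, htn, hT]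
  rw [htd]
  rw [abs_sub_le_iff]
  constructor <;> linarith

/-- The isometry embedding `H` into `(ℂ²⊗ℂ²) ⊗ H` along a vector `v`. -/
def isom {α d : Type*} [DecidableEq d] (v : α → ℂ) : Matrix (α × d) d ℂ :=
  fun pc b => if pc.2 = b then v pc.1 else 0

lemma isom_mul_self {α d : Type*} [Fintype α] [Fintype d] [DecidableEq d]
    (v : α → ℂ) (hv : ∑ p, star (v p) * v p = 1) :
    (isom (d := d) v)ᴴ * isom (d := d) v = 1 := by
  ext a b
  simp only [Matrix.mul_apply, Matrix.conjTranspose_apply, isom, Fintype.sum_prod_type]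
  by_cases h : a = b
  · subst h
    simpa using hv
  · simp [Matrix.one_apply, h, Ne.symm h]

lemma isom_sandwich {α d : Type*} [Fintype α] [Fintype d] [DecidableEq d]
    (v : α → ℂ) (X : Matrix d d ℂ) :
    isom (d := d) v * X * (isom (d := d) v)ᴴ = outerProj v ⊗ₖ X := by
  ext i j
  simp only [Matrix.mul_apply, Matrix.conjTranspose_apply, isom, outerProj,
    Matrix.kroneckerMap_apply, Matrix.vecMulVec_apply, Pi.star_apply]
  simp only [ite_mul, zero_mul, Finset.sum_ite_eq', Finset.mem_univ, if_true]
  simp only [apply_ite (star : ℂ → ℂ), mul_ite, mul_zero, star_zero, Finset.sum_ite_eq,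
    Finset.mem_univ, if_true]
  ring

lemma isom_povm {α d : Type*} [Fintype α] [Fintype d] [DecidableEq α] [DecidableEq d]
    (v : α → ℂ) (hv : ∑ p, star (v p) * v p = 1)
    {E : Matrix (α × d) (α × d) ℂ} (hE : IsPOVMElem E) :
    IsPOVMElem ((isom (d := d) v)ᴴ * E * isom (d := d) v) := by
  constructor
  · exact hE.1.conjTranspose_mul_mul_same _
  · have h : (1 : Matrix d d ℂ) - (isom (d := d) v)ᴴ * E * isom (d := d) v
        = (isom (d := d) v)ᴴ * (1 - E) * isom (d := d) v := by
      rw [Matrix.mul_sub, Matrix.sub_mul, Matrix.mul_one, isom_mul_self v hv]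
    rw [h]
    exact hE.2.conjTranspose_mul_mul_same _

lemma isom_trace {α d : Type*} [Fintype α] [Fintype d] [DecidableEq α] [DecidableEq d]
    (v : α → ℂ) (E : Matrix (α × d) (α × d) ℂ) (X : Matrix d d ℂ) :
    (E * (outerProj v ⊗ₖ X)).trace
      = (((isom (d := d) v)ᴴ * E * isom (d := d) v) * X).trace := by
  rw [← isom_sandwich v X, ← Matrix.mul_assoc, ← Matrix.mul_assoc, Matrix.trace_mul_comm]
  simp only [Matrix.mul_assoc]

lemma ketPhiPlus_norm : ∑ p, star (ketPhiPlus p) * ketPhiPlus p = 1 := by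
  have h2 : ((Real.sqrt 2 : ℝ) : ℂ)⁻¹ * ((Real.sqrt 2 : ℝ) : ℂ)⁻¹ = (1 / 2 : ℂ) := by
    rw [← mul_inv, ← Complex.ofReal_mul, Real.mul_self_sqrt (by norm_num)]
    norm_num
  simp only [Fintype.sum_prod_type, Fin.sum_univ_two, ketPhiPlus]
  norm_num
  rw [h2]
  norm_num

lemma ketPhiMinus_norm : ∑ p, star (ketPhiMinus p) * ketPhiMinus p = 1 := by
  have h2 : ((Real.sqrt 2 : ℝ) : ℂ)⁻¹ * ((Real.sqrt 2 : ℝ) : ℂ)⁻¹ = (1 / 2 : ℂ) := by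
    rw [← mul_inv, ← Complex.ofReal_mul, Real.mul_self_sqrt (by norm_num)]
    norm_num
  simp only [Fintype.sum_prod_type, Fin.sum_univ_two, ketPhiMinus]
  norm_num
  rw [h2]
  norm_num

lemma bell_meas_le {d : Type*} [Fintype d] [DecidableEq d]
    (v : Fin 2 × Fin 2 → ℂ) (hv : ∑ p, star (v p) * v p = 1)
    {ρ₀ ρ₁ : Matrix d d ℂ} (h₀ : IsDensity ρ₀) (h₁ : IsDensity ρ₁)
    {E : Matrix ((Fin 2 × Fin 2) × d) ((Fin 2 × Fin 2) × d) ℂ} (hE : IsPOVMElem E) :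
    ‖(E * (outerProj v ⊗ₖ (ρ₀ - ρ₁))).trace‖ ≤ traceDist ρ₀ ρ₁ := by
  rw [isom_trace v E (ρ₀ - ρ₁)]
  exact meas_le_traceDist' (isom_povm v hv hE) h₀ h₁

theorem stmt_10 {d : Type*} [Fintype d] [DecidableEq d]
    (ρ₀ ρ₁ : Matrix d d ℂ) (h₀ : IsDensity ρ₀) (h₁ : IsDensity ρ₁)
    (E : Matrix ((Fin 2 × Fin 2) × d) ((Fin 2 × Fin 2) × d) ℂ) (hE : IsPOVMElem E) :
    ‖(E * ((1/4 : ℂ) • ((bellPlus + bellMinus) ⊗ₖ (ρ₀ + ρ₁))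
          - (1/2 : ℂ) • (bellPlus ⊗ₖ ρ₀ + bellMinus ⊗ₖ ρ₁))).trace‖
      ≤ (1/4) * (‖(E * (bellPlus ⊗ₖ (ρ₀ - ρ₁))).trace‖
          + ‖(E * (bellMinus ⊗ₖ (ρ₀ - ρ₁))).trace‖) ∧
    (1/4) * (‖(E * (bellPlus ⊗ₖ (ρ₀ - ρ₁))).trace‖
          + ‖(E * (bellMinus ⊗ₖ (ρ₀ - ρ₁))).trace‖)
      ≤ (1/2) * traceDist ρ₀ ρ₁ := by
  constructor
  · have hkey : (1/4 : ℂ) • ((bellPlus + bellMinus) ⊗ₖ (ρ₀ + ρ₁))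
        - (1/2 : ℂ) • (bellPlus ⊗ₖ ρ₀ + bellMinus ⊗ₖ ρ₁)
        = (1/4 : ℂ) • (bellMinus ⊗ₖ (ρ₀ - ρ₁)) - (1/4 : ℂ) • (bellPlus ⊗ₖ (ρ₀ - ρ₁)) := by
      have hs : ∀ (A : Matrix (Fin 2 × Fin 2) (Fin 2 × Fin 2) ℂ),
          A ⊗ₖ (ρ₀ - ρ₁) = A ⊗ₖ ρ₀ - A ⊗ₖ ρ₁ := by
        intro A
        rw [sub_eq_add_neg, sub_eq_add_neg, Matrix.kronecker_add]
        congr 1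
        rw [show -ρ₁ = (-1 : ℂ) • ρ₁ by simp, Matrix.kronecker_smul]
        simp
      simp only [Matrix.add_kronecker, Matrix.kronecker_add, hs]
      module
    rw [hkey, Matrix.mul_sub, Matrix.mul_smul, Matrix.mul_smul, Matrix.trace_sub,
      Matrix.trace_smul, Matrix.trace_smul]
    calc ‖(1/4 : ℂ) • (E * (bellMinus ⊗ₖ (ρ₀ - ρ₁))).trace
          - (1/4 : ℂ) • (E * (bellPlus ⊗ₖ (ρ₀ - ρ₁))).trace‖
        ≤ ‖(1/4 : ℂ) • (E * (bellMinus ⊗ₖ (ρ₀ - ρ₁))).trace‖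
          + ‖(1/4 : ℂ) • (E * (bellPlus ⊗ₖ (ρ₀ - ρ₁))).trace‖ := by
          exact norm_sub_le _ _
      _ = (1/4) * (‖(E * (bellPlus ⊗ₖ (ρ₀ - ρ₁))).trace‖
          + ‖(E * (bellMinus ⊗ₖ (ρ₀ - ρ₁))).trace‖) := by
          have habs4 : ∀ z : ℂ, ‖(1/4 : ℂ) * z‖ = (1/4) * ‖z‖ := by
            intro z
            rw [norm_mul]
            norm_num
          simp only [smul_eq_mul, habs4]
          ring
  · have hp := bell_meas_le ketPhiPlus ketPhiPlus_norm h₀ h₁ hE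
    have hm := bell_meas_le ketPhiMinus ketPhiMinus_norm h₀ h₁ hE
    rw [show bellPlus = outerProj ketPhiPlus from rfl, show bellMinus = outerProj ketPhiMinus
      from rfl] at *
    linarith
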